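/- Let w, h : B_R → ℝ^d be integrable on concentric balls B_r ⊆ B_R ⊂ ℝ^d, and suppose there exist C₀ > 0 and α ∈ (0,1) such that for all 0 < r ≤ R: ∫_{B_r}|Dh − (Dh)_r| dx ≤ C₀ (r/R)^{d+α} ∫_{B_R}|Dh − (Dh)_R| dx (the interior decay estimate for h). Then there exists C > 0 depending only on C₀ such that for all 0 < r ≤ R: ∫_{B_r}|Dw − (Dw)_r| dx ≤ C (r/R)^{d+α} ∫_{B_R}|Dw − (Dw)_R| dx + C ∫_{B_R}|Dw − Dh| dx. -/

import Mathlib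

open MeasureTheory Metric

lemma osc_comp {d : ℕ} (x₀ : EuclideanSpace ℝ (Fin d)) {r : ℝ} (hr : 0 < r)
    {f g : EuclideanSpace ℝ (Fin d) → EuclideanSpace ℝ (Fin d)}
    (hf : IntegrableOn f (ball x₀ r)) (hg : IntegrableOn g (ball x₀ r)) :
    (∫ x in ball x₀ r, ‖f x - ⨍ y in ball x₀ r, f y‖) ≤
      (∫ x in ball x₀ r, ‖g x - ⨍ y in ball x₀ r, g y‖) +
        2 * ∫ x in ball x₀ r, ‖f x - g x‖ := by
  set s := ball x₀ r with hs
  set A := ⨍ y in s, f y with hA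
  set B := ⨍ y in s, g y with hB
  have hμ0 : volume s ≠ 0 := (measure_ball_pos volume x₀ hr).ne'
  have hμt : volume s ≠ ⊤ := measure_ball_lt_top.ne
  have hvpos : 0 < (volume s).toReal := ENNReal.toReal_pos hμ0 hμt
  have hfg : IntegrableOn (fun x => f x - g x) s := hf.sub hg
  have hAB : A - B = (volume s).toReal⁻¹ • ∫ x in s, (f x - g x) := by
    rw [hA, hB, setAverage_eq, setAverage_eq, integral_sub hf hg, smul_sub]
    rfl
  have hABnorm : (volume s).toReal * ‖A - B‖ ≤ ∫ x in s, ‖f x - g x‖ := by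
    rw [hAB, norm_smul, Real.norm_eq_abs, abs_inv, abs_of_pos hvpos,
      ← mul_assoc, mul_inv_cancel₀ hvpos.ne', one_mul]
    exact norm_integral_le_integral_norm _
  have hptwise : ∀ x, ‖f x - A‖ ≤ ‖g x - B‖ + ‖f x - g x‖ + ‖A - B‖ := by
    intro x
    have : f x - A = (g x - B) + (f x - g x) + (B - A) := by abel
    rw [this]
    calc ‖(g x - B) + (f x - g x) + (B - A)‖
        ≤ ‖(g x - B) + (f x - g x)‖ + ‖B - A‖ := norm_add_le _ _
      _ ≤ ‖g x - B‖ + ‖f x - g x‖ + ‖A - B‖ := by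
          rw [norm_sub_rev B A]; exact add_le_add (norm_add_le _ _) le_rfl
  have hcB : IntegrableOn (fun _ : EuclideanSpace ℝ (Fin d) => B) s :=
    integrableOn_const measure_ball_lt_top.ne
  have hgB : IntegrableOn (fun x => ‖g x - B‖) s := (hg.sub hcB).norm
  have hfgn : IntegrableOn (fun x => ‖f x - g x‖) s := hfg.norm
  have hint1 : IntegrableOn (fun x => ‖g x - B‖ + ‖f x - g x‖) s := hgB.add hfgn
  have hint2 : IntegrableOn (fun _ => ‖A - B‖) s :=
    integrableOn_const measure_ball_lt_top.ne
  have hcA : IntegrableOn (fun _ : EuclideanSpace ℝ (Fin d) => A) s :=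
    integrableOn_const measure_ball_lt_top.ne
  calc ∫ x in s, ‖f x - A‖
      ≤ ∫ x in s, (‖g x - B‖ + ‖f x - g x‖ + ‖A - B‖) := by
        exact integral_mono ((hf.sub hcA).norm) (hint1.add hint2) fun x => hptwise x
    _ = (∫ x in s, (‖g x - B‖ + ‖f x - g x‖)) + ∫ x in s, ‖A - B‖ :=
        integral_add hint1 hint2
    _ = (∫ x in s, ‖g x - B‖) + (∫ x in s, ‖f x - g x‖) + (volume s).toReal * ‖A - B‖ := by
        rw [integral_add hgB hfgn, setIntegral_const, smul_eq_mul]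
        rfl
    _ ≤ (∫ x in s, ‖g x - B‖) + (∫ x in s, ‖f x - g x‖) + ∫ x in s, ‖f x - g x‖ := by
        gcongr
    _ = (∫ x in s, ‖g x - B‖) + 2 * ∫ x in s, ‖f x - g x‖ := by ring

theorem oscillation_perturbation (C₀ : ℝ) (hC₀ : 0 < C₀) :
    ∃ C > 0, ∀ (d : ℕ) (x₀ : EuclideanSpace ℝ (Fin d)) (R : ℝ), 0 < R →
      ∀ (Dw Dh : EuclideanSpace ℝ (Fin d) → EuclideanSpace ℝ (Fin d)),
      IntegrableOn Dw (ball x₀ R) →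
      IntegrableOn Dh (ball x₀ R) →
      ∀ (α : ℝ), α ∈ Set.Ioo (0:ℝ) 1 →
      (∀ r : ℝ, 0 < r → r ≤ R →
        (∫ x in ball x₀ r, ‖Dh x - ⨍ y in ball x₀ r, Dh y‖) ≤
          C₀ * (r / R) ^ ((d : ℝ) + α) *
            ∫ x in ball x₀ R, ‖Dh x - ⨍ y in ball x₀ R, Dh y‖) →
      ∀ r : ℝ, 0 < r → r ≤ R →
        (∫ x in ball x₀ r, ‖Dw x - ⨍ y in ball x₀ r, Dw y‖) ≤
          C * (r / R) ^ ((d : ℝ) + α) *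
            (∫ x in ball x₀ R, ‖Dw x - ⨍ y in ball x₀ R, Dw y‖) +
            C * ∫ x in ball x₀ R, ‖Dw x - Dh x‖ := by
  refine ⟨2 * C₀ + 2, by linarith, ?_⟩
  intro d x₀ R hR Dw Dh hw hh α hα hdecay r hr hrR
  have hsub : ball x₀ r ⊆ ball x₀ R := ball_subset_ball hrR
  have hwr : IntegrableOn Dw (ball x₀ r) := hw.mono_set hsub
  have hhr : IntegrableOn Dh (ball x₀ r) := hh.mono_set hsub
  set E := ∫ x in ball x₀ R, ‖Dw x - Dh x‖ with hE
  have hEnn : 0 ≤ E := integral_nonneg fun x => norm_nonneg _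
  have hEr : (∫ x in ball x₀ r, ‖Dw x - Dh x‖) ≤ E := by
    apply setIntegral_mono_set (hw.sub hh).norm
    · exact Filter.Eventually.of_forall fun x => norm_nonneg _
    · exact HasSubset.Subset.eventuallyLE hsub
  have hFRnn : 0 ≤ ∫ x in ball x₀ R, ‖Dw x - ⨍ y in ball x₀ R, Dw y‖ :=
    integral_nonneg fun x => norm_nonneg _
  set t := (r / R) ^ ((d : ℝ) + α) with ht
  have ht0 : 0 < t := Real.rpow_pos_of_pos (div_pos hr hR) _
  have ht1 : t ≤ 1 := Real.rpow_le_one (div_nonneg hr.le hR.le) (div_le_one_of_le₀ hrR hR.le) (add_nonneg (Nat.cast_nonneg d) hα.1.le)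
  have step1 := osc_comp x₀ hr hwr hhr
  have step2 := hdecay r hr hrR
  have step3 := osc_comp x₀ hR hh hw
  have hsym : (∫ x in ball x₀ R, ‖Dh x - Dw x‖) = E := by
    rw [hE]
    congr 1 with x
    rw [norm_sub_rev]
  rw [hsym] at step3
  rw [← ht] at step2
  set FR := ∫ x in ball x₀ R, ‖Dw x - ⨍ y in ball x₀ R, Dw y‖ with hFR
  have h2 := mul_le_mul_of_nonneg_left step3 (mul_pos hC₀ ht0).le
  have h4 : C₀ * t * FR ≤ (2 * C₀ + 2) * t * FR := by
    have : C₀ * t ≤ (2 * C₀ + 2) * t := by nlinarith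
    exact mul_le_mul_of_nonneg_right this hFRnn
  have h5 : C₀ * t * E ≤ C₀ * E := by
    nlinarith [mul_nonneg (mul_nonneg hC₀.le hEnn) (sub_nonneg.2 ht1)]
  nlinarith [step1, step2, hEr, h2, h4, h5]
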